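/- Let D, M_r, N, P be positive integers with M_r ≤ D and N ≤ D, and let σ > 0, σ̃ ≥ 0, ε ≥ 0, λ > 0 be real numbers. Let C be the diagonal D × D matrix with first M_r diagonal entries equal to σ² and the rest 0, let C̃ = σ̃² I_D, and let β ∈ ℝ^D with β_ρ = 0 for ρ > N. Set α = P/M_r, λ̃ = λD/(σ² M_r), let κ' be the unique positive root of κ'² + (α − 1 − λ̃)κ' − λ̃α = 0, and set κ = σ² M_r κ' / D. Then: (i) κ satisfies the self-consistent equation κ = λ + κ Tr[C (P C + κ D I)⁻¹]; and (ii) with γ = P Tr[C² (PC + κD I)⁻²] and γ' = P Tr[C̃ C (PC + κD I)⁻²], one has γ < 1 and γ/(1−γ) ε² + (κD)²/(1−γ) βᵀ C (PC + κD I)⁻² β + (γ' − γ)/(1−γ) ε² + (κD)² βᵀ (PC + κD I)⁻¹ ( C̃ − ((1−γ')/(1−γ)) C ) (PC + κD I)⁻¹ β = σ̃² [ (ε²/σ²)·α/((κ' + α)² − α) + (κ'²/((κ' + α)² − α)) Σ_{ρ=1}^{M_r} β_ρ² + Σ_{ρ=M_r+1}^{N} β_ρ² ]. -/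

import Mathlib

open Matrix

set_option maxHeartbeats 2000000 in
/-- Closed-form OOD generalization error for linear regression with
training covariance `C = diag(σ²,…,σ²,0,…,0)` (rank `M_r`), test covariance
`C̃ = σ̃² I`, target `β` supported on the first `N` coordinates. With `α = P/M_r`,
`λ̃ = λD/(σ²M_r)`, `κ'` the unique positive root of `κ'² + (α−1−λ̃)κ' − λ̃α = 0`
and `κ = σ²M_r κ'/D`: (i) `κ = λ + κ Tr[C (PC + κD I)⁻¹]`; and (ii) with
`γ = P Tr[C²(PC+κDI)⁻²]`, `γ' = P Tr[C̃C(PC+κDI)⁻²]`, one has `γ < 1` and the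
theoretical error expression equals
`σ̃²[(ε²/σ²)·α/((κ'+α)²−α) + κ'²/((κ'+α)²−α)·Σ_{ρ≤M_r}β_ρ² + Σ_{M_r<ρ≤N}β_ρ²]`. -/
theorem stmt_19 (D Mr N P : ℕ) (hD : 0 < D) (hMr : 0 < Mr) (hN : 0 < N) (hP : 0 < P)
    (hMrD : Mr ≤ D) (hND : N ≤ D)
    (σ σt ε lam : ℝ) (hσ : 0 < σ) (hσt : 0 ≤ σt) (hε : 0 ≤ ε) (hlam : 0 < lam)
    (β : Fin D → ℝ) (hβ : ∀ i : Fin D, N ≤ (i : ℕ) → β i = 0)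
    (κ' : ℝ)
    (hκ'pos : 0 < κ')
    (hκ'root : κ' ^ 2 + ((P : ℝ) / Mr - 1 - lam * D / (σ ^ 2 * Mr)) * κ'
        - (lam * D / (σ ^ 2 * Mr)) * ((P : ℝ) / Mr) = 0) :
    let α : ℝ := (P : ℝ) / Mr
    let κ : ℝ := σ ^ 2 * Mr * κ' / D
    let C : Matrix (Fin D) (Fin D) ℝ :=
      diagonal fun i => if (i : ℕ) < Mr then σ ^ 2 else 0
    let Ct : Matrix (Fin D) (Fin D) ℝ := σt ^ 2 • 1
    let Minv : Matrix (Fin D) (Fin D) ℝ :=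
      ((P : ℝ) • C + (κ * D) • (1 : Matrix (Fin D) (Fin D) ℝ))⁻¹
    let γ : ℝ := (P : ℝ) * (C * C * Minv * Minv).trace
    let γ' : ℝ := (P : ℝ) * (Ct * C * Minv * Minv).trace
    (κ = lam + κ * (C * Minv).trace) ∧
    γ < 1 ∧
    (γ / (1 - γ) * ε ^ 2
        + (κ * D) ^ 2 / (1 - γ) * (β ⬝ᵥ ((C * Minv * Minv) *ᵥ β))
        + (γ' - γ) / (1 - γ) * ε ^ 2
        + (κ * D) ^ 2 *
            (β ⬝ᵥ ((Minv * (Ct - ((1 - γ') / (1 - γ)) • C) * Minv) *ᵥ β))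
      = σt ^ 2 * ((ε ^ 2 / σ ^ 2) * α / ((κ' + α) ^ 2 - α)
          + (κ' ^ 2 / ((κ' + α) ^ 2 - α)) *
              (∑ ρ ∈ Finset.univ.filter fun ρ : Fin D => (ρ : ℕ) < Mr, β ρ ^ 2)
          + ∑ ρ ∈ Finset.univ.filter
              (fun ρ : Fin D => Mr ≤ (ρ : ℕ) ∧ (ρ : ℕ) < N), β ρ ^ 2)) := by
  intro α κ C Ct Minv γ γ'
  have hDR : (0:ℝ) < D := by exact_mod_cast hD
  have hMrR : (0:ℝ) < Mr := by exact_mod_cast hMr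
  have hPR : (0:ℝ) < P := by exact_mod_cast hP
  have hσ' : σ ≠ 0 := ne_of_gt hσ
  have hMr' : (Mr:ℝ) ≠ 0 := ne_of_gt hMrR
  have hD' : (D:ℝ) ≠ 0 := ne_of_gt hDR
  -- normalize the root equation to polynomial form
  have hroot : σ ^ 2 * Mr * (Mr * κ' ^ 2) + (σ ^ 2 * P * Mr - σ ^ 2 * Mr * Mr
      - lam * D * Mr) * κ' - lam * D * P = 0 := by
    have h := hκ'root
    field_simp at h
    have h2 : σ ^ 2 * Mr * Mr * (σ ^ 2 * Mr * (Mr * κ' ^ 2) + (σ ^ 2 * P * Mr - σ ^ 2 * Mr * Mr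
        - lam * D * Mr) * κ' - lam * D * P) = 0 := by linear_combination (σ ^ 2 * Mr * Mr) * h
    rcases mul_eq_zero.mp h2 with h3 | h3
    · exact absurd h3 (by positivity)
    · exact h3
  have hKD : κ * (D:ℝ) = σ ^ 2 * (Mr * κ') := by
    rw [show κ = σ ^ 2 * Mr * κ' / D from rfl, div_mul_cancel₀ _ hD']
    ring
  have hApos : (0:ℝ) < (P:ℝ) * σ ^ 2 + σ ^ 2 * (Mr * κ') := by positivity
  have hBpos : (0:ℝ) < σ ^ 2 * (Mr * κ') := by positivity
  have hA' := ne_of_gt hApos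
  have hB' := ne_of_gt hBpos
  have hMgt : (Mr:ℝ) < P + Mr * κ' := by
    nlinarith [hroot, mul_pos hlam hDR, mul_pos (mul_pos (pow_pos hσ 2) hMrR) hκ'pos,
      mul_pos hlam (mul_pos hDR hPR),
      mul_pos (mul_pos hlam hDR) (mul_pos hMrR hκ'pos)]
  -- diagonal descriptions
  have hC : C = diagonal (fun i : Fin D => if (i:ℕ) < Mr then σ ^ 2 else 0) := rfl
  have hCt : Ct = diagonal (fun _ : Fin D => σt ^ 2) := by
    show σt ^ 2 • (1 : Matrix (Fin D) (Fin D) ℝ) = _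
    rw [← Matrix.diagonal_one, ← Matrix.diagonal_smul]
    refine congrArg Matrix.diagonal (funext fun i => ?_); simp
  have hMinv : Minv = diagonal (fun i : Fin D =>
      (if (i:ℕ) < Mr then (P:ℝ) * σ ^ 2 + σ ^ 2 * (Mr * κ') else σ ^ 2 * (Mr * κ'))⁻¹) := by
    have hMdiag : (P:ℝ) • C + (κ * ↑D) • (1 : Matrix (Fin D) (Fin D) ℝ)
        = diagonal (fun i : Fin D =>
          if (i:ℕ) < Mr then (P:ℝ) * σ ^ 2 + σ ^ 2 * (Mr * κ') else σ ^ 2 * (Mr * κ')) := by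
      rw [hKD, hC, ← Matrix.diagonal_one, ← Matrix.diagonal_smul, ← Matrix.diagonal_smul,
        Matrix.diagonal_add]
      refine congrArg Matrix.diagonal (funext fun i => ?_)
      by_cases h : (i:ℕ) < Mr <;> simp [h]
    show ((P:ℝ) • C + (κ * ↑D) • 1)⁻¹ = _
    apply Matrix.inv_eq_right_inv
    rw [hMdiag, Matrix.diagonal_mul_diagonal]
    have hfun : (fun i : Fin D =>
        (if (i:ℕ) < Mr then (P:ℝ) * σ ^ 2 + σ ^ 2 * (Mr * κ') else σ ^ 2 * (Mr * κ'))
        * (if (i:ℕ) < Mr then (P:ℝ) * σ ^ 2 + σ ^ 2 * (Mr * κ') else σ ^ 2 * (Mr * κ'))⁻¹)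
        = fun _ : Fin D => (1:ℝ) := by
      funext i; by_cases h : (i:ℕ) < Mr
      · simp only [h, if_true]; exact mul_inv_cancel₀ hA'
      · simp only [h, if_false]; exact mul_inv_cancel₀ hB'
    rw [hfun, Matrix.diagonal_one]
  -- sum helpers
  have hcard : ∀ c : ℝ, (∑ i : Fin D, if (i:ℕ) < Mr then c else 0) = Mr * c := by
    intro c
    rw [Fin.sum_univ_eq_sum_range (fun i => if i < Mr then c else 0) D, ← Finset.sum_filter]
    have : Finset.filter (fun i => i < Mr) (Finset.range D) = Finset.range Mr := by
      ext x; simp; omega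
    rw [this, Finset.sum_const, Finset.card_range, nsmul_eq_mul]
  have hquad : ∀ u : Fin D → ℝ, β ⬝ᵥ (diagonal u *ᵥ β) = ∑ i, u i * β i ^ 2 := by
    intro u
    unfold dotProduct
    refine Finset.sum_congr rfl fun i _ => ?_
    rw [Matrix.mulVec_diagonal]; ring
  have hsum_ite : ∀ c1 c2 : ℝ,
      (∑ i : Fin D, if (i:ℕ) < Mr then c1 * β i ^ 2 else c2 * β i ^ 2)
      = c1 * (∑ ρ ∈ Finset.univ.filter fun ρ : Fin D => (ρ:ℕ) < Mr, β ρ ^ 2)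
        + c2 * (∑ ρ ∈ Finset.univ.filter
            (fun ρ : Fin D => Mr ≤ (ρ:ℕ) ∧ (ρ:ℕ) < N), β ρ ^ 2) := by
    intro c1 c2
    have split : ∀ i : Fin D, (if (i:ℕ) < Mr then c1 * β i ^ 2 else c2 * β i ^ 2)
        = (if (i:ℕ) < Mr then c1 * β i ^ 2 else 0)
          + (if Mr ≤ (i:ℕ) then c2 * β i ^ 2 else 0) := by
      intro i; by_cases h : (i:ℕ) < Mr
      · simp [h, Nat.not_le.mpr h]
      · simp [h, Nat.not_lt.mp h]
    rw [Finset.sum_congr rfl fun i _ => split i, Finset.sum_add_distrib,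
      ← Finset.sum_filter, ← Finset.sum_filter, Finset.mul_sum, Finset.mul_sum]
    congr 1
    refine (Finset.sum_subset ?_ ?_).symm
    · intro x hx; simp at hx ⊢; omega
    · intro x hx hx'
      simp only [Finset.mem_filter, Finset.mem_univ, true_and] at hx hx'
      have : N ≤ (x:ℕ) := by omega
      rw [hβ x this]; ring
  -- traces
  have htr1 : (C * Minv).trace = Mr * (σ ^ 2 * ((P:ℝ) * σ ^ 2 + σ ^ 2 * (Mr * κ'))⁻¹) := by
    rw [hC, hMinv, Matrix.diagonal_mul_diagonal, Matrix.trace_diagonal]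
    rw [Finset.sum_congr rfl fun i _ => ?_, hcard (σ ^ 2 * ((P:ℝ) * σ ^ 2 + σ ^ 2 * (Mr * κ'))⁻¹)]
    by_cases h : (i:ℕ) < Mr <;> simp [h]
  have htr2 : (C * C * Minv * Minv).trace
      = Mr * (σ ^ 2 * σ ^ 2 * (((P:ℝ) * σ ^ 2 + σ ^ 2 * (Mr * κ'))⁻¹
        * ((P:ℝ) * σ ^ 2 + σ ^ 2 * (Mr * κ'))⁻¹)) := by
    rw [hC, hMinv]
    simp only [Matrix.diagonal_mul_diagonal]
    rw [Matrix.trace_diagonal, Finset.sum_congr rfl fun i _ => ?_, hcard _]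
    by_cases h : (i:ℕ) < Mr <;> simp [h] <;> ring
  have htr3 : (Ct * C * Minv * Minv).trace
      = Mr * (σt ^ 2 * σ ^ 2 * (((P:ℝ) * σ ^ 2 + σ ^ 2 * (Mr * κ'))⁻¹
        * ((P:ℝ) * σ ^ 2 + σ ^ 2 * (Mr * κ'))⁻¹)) := by
    rw [hCt, hC, hMinv]
    simp only [Matrix.diagonal_mul_diagonal]
    rw [Matrix.trace_diagonal, Finset.sum_congr rfl fun i _ => ?_, hcard _]
    by_cases h : (i:ℕ) < Mr <;> simp [h] <;> ring
  have hq1 : β ⬝ᵥ ((C * Minv * Minv) *ᵥ β)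
      = (σ ^ 2 * (((P:ℝ) * σ ^ 2 + σ ^ 2 * (Mr * κ'))⁻¹
          * ((P:ℝ) * σ ^ 2 + σ ^ 2 * (Mr * κ'))⁻¹))
          * (∑ ρ ∈ Finset.univ.filter fun ρ : Fin D => (ρ:ℕ) < Mr, β ρ ^ 2)
        + 0 * (∑ ρ ∈ Finset.univ.filter
            (fun ρ : Fin D => Mr ≤ (ρ:ℕ) ∧ (ρ:ℕ) < N), β ρ ^ 2) := by
    rw [hC, hMinv]
    simp only [Matrix.diagonal_mul_diagonal]
    rw [hquad _, Finset.sum_congr rfl fun i _ => ?_, hsum_ite _ _]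
    by_cases h : (i:ℕ) < Mr <;> simp only [h, if_true, if_false] <;> ring
  have hq2 : ∀ c : ℝ, β ⬝ᵥ ((Minv * (Ct - c • C) * Minv) *ᵥ β)
      = ((((P:ℝ) * σ ^ 2 + σ ^ 2 * (Mr * κ'))⁻¹ * (σt ^ 2 - c * σ ^ 2)
          * ((P:ℝ) * σ ^ 2 + σ ^ 2 * (Mr * κ'))⁻¹))
          * (∑ ρ ∈ Finset.univ.filter fun ρ : Fin D => (ρ:ℕ) < Mr, β ρ ^ 2)
        + ((σ ^ 2 * (Mr * κ'))⁻¹ * σt ^ 2 * (σ ^ 2 * (Mr * κ'))⁻¹)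
          * (∑ ρ ∈ Finset.univ.filter
            (fun ρ : Fin D => Mr ≤ (ρ:ℕ) ∧ (ρ:ℕ) < N), β ρ ^ 2) := by
    intro c
    have hsub : Ct - c • C = diagonal (fun i : Fin D =>
        σt ^ 2 - c * (if (i:ℕ) < Mr then σ ^ 2 else 0)) := by
      rw [hCt, hC, ← Matrix.diagonal_smul, Matrix.diagonal_sub]
      refine congrArg Matrix.diagonal (funext fun i => ?_)
      simp
    rw [hsub, hMinv]
    simp only [Matrix.diagonal_mul_diagonal]
    rw [hquad _, Finset.sum_congr rfl fun i _ => ?_, hsum_ite _ _]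
    by_cases h : (i:ℕ) < Mr <;> simp only [h, if_true, if_false] <;> ring
  -- scalar facts
  have hgt1 : 1 < κ' + (P:ℝ)/Mr := by
    rw [show κ' + (P:ℝ)/Mr = ((P:ℝ) + Mr*κ')/Mr by field_simp; ring, lt_div_iff₀ hMrR]
    linarith [hMgt]
  have hEpos : 0 < (κ' + (P:ℝ)/Mr) ^ 2 - (P:ℝ)/Mr := by
    have h0 : 0 < (κ' + (P:ℝ)/Mr - 1) * (κ' + (P:ℝ)/Mr) :=
      mul_pos (by linarith) (by linarith)
    nlinarith [h0, hκ'pos]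
  have hγlt1 : (P:ℝ) * (Mr * (σ ^ 2 * σ ^ 2 * (((P:ℝ) * σ ^ 2 + σ ^ 2 * (Mr * κ'))⁻¹
      * ((P:ℝ) * σ ^ 2 + σ ^ 2 * (Mr * κ'))⁻¹))) < 1 := by
    have hPM : (P:ℝ) * Mr < ((P:ℝ) + Mr * κ') ^ 2 := by
      have hx : (P:ℝ) < P + Mr * κ' := by nlinarith [mul_pos hMrR hκ'pos]
      nlinarith [hMgt, hx, hPR, hMrR, mul_pos hPR hMrR]
    have heq : (P:ℝ) * (Mr * (σ ^ 2 * σ ^ 2 * (((P:ℝ) * σ ^ 2 + σ ^ 2 * (Mr * κ'))⁻¹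
        * ((P:ℝ) * σ ^ 2 + σ ^ 2 * (Mr * κ'))⁻¹)))
        = ((P:ℝ) * Mr * (σ ^ 2 * σ ^ 2))
          / (((P:ℝ) * σ ^ 2 + σ ^ 2 * (Mr * κ')) * ((P:ℝ) * σ ^ 2 + σ ^ 2 * (Mr * κ'))) := by
      rw [div_eq_mul_inv, mul_inv]; ring
    rw [heq, div_lt_one (by positivity)]
    nlinarith [mul_lt_mul_of_pos_left hPM (show (0:ℝ) < σ ^ 2 * σ ^ 2 by positivity)]
  have hγe : γ = (P:ℝ) * (Mr * (σ ^ 2 * σ ^ 2 * (((P:ℝ) * σ ^ 2 + σ ^ 2 * (Mr * κ'))⁻¹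
      * ((P:ℝ) * σ ^ 2 + σ ^ 2 * (Mr * κ'))⁻¹))) := by
    rw [show γ = (P:ℝ) * (C * C * Minv * Minv).trace from rfl, htr2]
  have hγ'e : γ' = (P:ℝ) * (Mr * (σt ^ 2 * σ ^ 2 * (((P:ℝ) * σ ^ 2 + σ ^ 2 * (Mr * κ'))⁻¹
      * ((P:ℝ) * σ ^ 2 + σ ^ 2 * (Mr * κ'))⁻¹))) := by
    rw [show γ' = (P:ℝ) * (Ct * C * Minv * Minv).trace from rfl, htr3]
  refine ⟨?_, ?_, ?_⟩
  · rw [htr1, show κ = σ ^ 2 * ↑Mr * κ' / ↑D from rfl]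
    field_simp
    linear_combination hroot
  · rw [hγe]
    exact hγlt1
  · rw [hq1, hq2 _, hγe, hγ'e, hKD, show α = (P:ℝ)/↑Mr from rfl]
    have hxpos : (0:ℝ) < κ' + (P:ℝ)/Mr := by linarith
    have hx' : κ' + (P:ℝ)/Mr ≠ 0 := ne_of_gt hxpos
    have hγs : (P:ℝ) * (Mr * (σ ^ 2 * σ ^ 2 * (((P:ℝ) * σ ^ 2 + σ ^ 2 * (Mr * κ'))⁻¹
        * ((P:ℝ) * σ ^ 2 + σ ^ 2 * (Mr * κ'))⁻¹)))
        = ((P:ℝ)/Mr) / ((κ' + (P:ℝ)/Mr) ^ 2) := by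
      field_simp
      ring
    have hγ's : (P:ℝ) * (Mr * (σt ^ 2 * σ ^ 2 * (((P:ℝ) * σ ^ 2 + σ ^ 2 * (Mr * κ'))⁻¹
        * ((P:ℝ) * σ ^ 2 + σ ^ 2 * (Mr * κ'))⁻¹)))
        = σt ^ 2 * (((P:ℝ)/Mr) / ((κ' + (P:ℝ)/Mr) ^ 2)) / σ ^ 2 := by
      field_simp
      ring
    have hAt : (P:ℝ) * σ ^ 2 + σ ^ 2 * (↑Mr * κ') = σ ^ 2 * Mr * (κ' + (P:ℝ)/Mr) := by
      field_simp; ring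
    rw [hγs, hγ's, hAt]
    generalize hteq : (P:ℝ)/(Mr:ℝ) = t at hEpos hxpos ⊢
    have hx' : κ' + t ≠ 0 := ne_of_gt hxpos
    have hE' : (κ' + t) ^ 2 - t ≠ 0 := ne_of_gt hEpos
    have h1γeq : 1 - t/(κ' + t) ^ 2 = ((κ' + t) ^ 2 - t)/(κ' + t) ^ 2 := by
      field_simp
    rw [h1γeq]
    have hκ'' : κ' ≠ 0 := ne_of_gt hκ'pos
    field_simp
    ring
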